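/- Let F be a field with char(F) ≠ 2 and G a non-abelian group with a unique non-identity commutator s (so G' = {1,s}, s central of order 2), equipped with the canonical involution g* = g if g is central and g* = sg otherwise. Then FG is normal: αα* = α*α for all α ∈ FG. -/

import Mathlib

/-- The F-linear extension of a group involution `st` to the group algebra. -/
noncomputable def invMap {F G : Type*} [Field F] [Group G] (st : G → G) :
    MonoidAlgebra F G → MonoidAlgebra F G :=
  fun α => MonoidAlgebra.ofCoeff (Finsupp.mapDomain st α.coeff)

theorem stmt_6 {F G : Type*} [Field F] [Group G] (h2 : (2 : F) ≠ 0)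
    (hna : ∃ g h : G, g * h ≠ h * g)
    (s : G) (hs1 : s ≠ 1) (hsc : s ∈ Subgroup.center G) (hs2 : s * s = 1)
    (hcomm : ∀ g h : G, g⁻¹ * h⁻¹ * g * h = 1 ∨ g⁻¹ * h⁻¹ * g * h = s)
    (hLC : ∀ g h : G, g * h = h * g ↔
      (g ∈ Subgroup.center G ∨ h ∈ Subgroup.center G ∨ g * h ∈ Subgroup.center G))
    (st : G → G)
    (hst1 : ∀ g : G, g ∈ Subgroup.center G → st g = g)
    (hst2 : ∀ g : G, g ∉ Subgroup.center G → st g = s * g) :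
    ∀ α : MonoidAlgebra F G, α * invMap st α = invMap st α * α := by
  intro α
  have hsc' := Subgroup.mem_center_iff.mp hsc
  have key : ∀ g h : G, (g * st h = st g * h ∧ h * st g = st h * g) ∨
      (g * st h = st h * g ∧ h * st g = st g * h) := by
    intro g h
    by_cases hg : g ∈ Subgroup.center G <;> by_cases hh : h ∈ Subgroup.center G
    · left; rw [hst1 g hg, hst1 h hh]
      exact ⟨rfl, rfl⟩
    · right; rw [hst1 g hg, hst2 h hh]
      have hgc := Subgroup.mem_center_iff.mp hg
      exact ⟨(hgc (s * h)).symm, hgc h⟩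
    · right; rw [hst2 g hg, hst1 h hh]
      have hhc := Subgroup.mem_center_iff.mp hh
      exact ⟨hhc g, (hhc (s * g)).symm⟩
    · left; rw [hst2 g hg, hst2 h hh]
      constructor
      · rw [← mul_assoc, hsc' g, mul_assoc]
      · rw [← mul_assoc, hsc' h, mul_assoc]
  have expand1 : α * invMap st α = α.coeff.sum fun g cg => α.coeff.sum fun h ch =>
      MonoidAlgebra.single (g * st h) (cg * ch) := by
    rw [MonoidAlgebra.mul_def]
    refine Finsupp.sum_congr fun g _ => ?_
    show Finsupp.sum (Finsupp.mapDomain st α.coeff) _ = _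
    exact Finsupp.sum_mapDomain_index (fun h => by simp)
      (fun h b₁ b₂ => by simp [mul_add, MonoidAlgebra.single_add])
  have expand2 : invMap st α * α = α.coeff.sum fun g cg => α.coeff.sum fun h ch =>
      MonoidAlgebra.single (st g * h) (cg * ch) := by
    rw [MonoidAlgebra.mul_def]
    show Finsupp.sum (Finsupp.mapDomain st α.coeff) _ = _
    exact Finsupp.sum_mapDomain_index
      (fun g => by simp [Finsupp.sum])
      (fun g b₁ b₂ => by
        simp only [add_mul, MonoidAlgebra.single_add]
        rw [Finsupp.sum_add])
  rw [expand1, expand2]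
  apply smul_right_injective (MonoidAlgebra F G) h2
  dsimp only
  rw [two_smul, two_smul]
  have swap1 : (α.coeff.sum fun g cg => α.coeff.sum fun h ch =>
        MonoidAlgebra.single (g * st h) (cg * ch))
      = α.coeff.sum fun g cg => α.coeff.sum fun h ch =>
        MonoidAlgebra.single (h * st g) (cg * ch) := by
    rw [Finsupp.sum_comm]
    exact Finsupp.sum_congr fun g _ => Finsupp.sum_congr fun h _ => by rw [mul_comm]
  have swap2 : (α.coeff.sum fun g cg => α.coeff.sum fun h ch =>
        MonoidAlgebra.single (st g * h) (cg * ch))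
      = α.coeff.sum fun g cg => α.coeff.sum fun h ch =>
        MonoidAlgebra.single (st h * g) (cg * ch) := by
    rw [Finsupp.sum_comm]
    exact Finsupp.sum_congr fun g _ => Finsupp.sum_congr fun h _ => by rw [mul_comm]
  nth_rewrite 2 [swap1]
  nth_rewrite 2 [swap2]
  rw [← Finsupp.sum_add, ← Finsupp.sum_add]
  refine Finsupp.sum_congr fun g _ => ?_
  rw [← Finsupp.sum_add, ← Finsupp.sum_add]
  refine Finsupp.sum_congr fun h _ => ?_
  rcases key g h with ⟨e1, e2⟩ | ⟨e1, e2⟩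
  · rw [e1, e2]
  · rw [e1, e2, add_comm]
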